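/- Let A, B ∈ ℝ^{m×n} both have full rank min{m,n}. Then ‖A⁺ − B⁺‖₂ ≤ α‖A⁺‖₂‖B⁺‖₂‖A − B‖₂, where α = √2 if m ≠ n and α = 1 if m = n, and A⁺ denotes the Moore–Penrose pseudoinverse. -/

import Mathlib

open Matrix Kronecker
open scoped Matrix.Norms.L2Operator

/-- Spectral (operator 2-) norm of a real matrix. -/
noncomputable def spec {m n : Type*} [Fintype m] [Fintype n] [DecidableEq n]
    (A : Matrix m n ℝ) : ℝ :=
  ‖LinearMap.toContinuousLinearMap (Matrix.toEuclideanLin A)‖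

/-- Frobenius norm of a real matrix. -/
noncomputable def frob {m n : Type*} [Fintype m] [Fintype n] (A : Matrix m n ℝ) : ℝ :=
  Real.sqrt (∑ i, ∑ j, (A i j) ^ 2)

/-- `B` is the Moore–Penrose pseudoinverse of `A` (the four Penrose equations, real case). -/
def IsPinv {m n : Type*} [Fintype m] [Fintype n]
    (A : Matrix m n ℝ) (B : Matrix n m ℝ) : Prop :=
  A * B * A = A ∧ B * A * B = B ∧ (A * B)ᵀ = A * B ∧ (B * A)ᵀ = B * A

/-- Khatri–Rao (column-wise Kronecker) product. -/
def khatriRao {p q K : Type*} (A : Matrix p K ℝ) (B : Matrix q K ℝ) :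
    Matrix (p × q) K ℝ :=
  Matrix.of fun ij k => A ij.1 k * B ij.2 k

/-- The `j`-th largest singular value of a real matrix (singular values sorted
descending, i.e. square roots of the eigenvalues of `AᵀA`). -/
noncomputable def singVal {n K : ℕ} (A : Matrix (Fin n) (Fin K) ℝ) (j : Fin K) : ℝ :=
  (Multiset.sort (r := (· ≥ ·)) (Finset.univ.val.map fun i =>
    Real.sqrt ((show (Aᵀ * A).IsHermitian from Matrix.isHermitian_conjTranspose_mul_self A).eigenvalues i))).getD j 0

/-- Smallest singular value of a real matrix. -/
noncomputable def sigmaMin {m n : Type*} [Fintype m] [Fintype n] [DecidableEq n]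
    (A : Matrix m n ℝ) : ℝ :=
  Real.sqrt (⨅ j, (show (Aᵀ * A).IsHermitian from Matrix.isHermitian_conjTranspose_mul_self A).eigenvalues j)

/-- Smallest nonzero singular value of a real matrix. -/
noncomputable def sigmaMinPos {m n : Type*} [Fintype m] [Fintype n] [DecidableEq n]
    (A : Matrix m n ℝ) : ℝ :=
  sInf {s : ℝ | s ≠ 0 ∧
    ∃ i, s = Real.sqrt ((show (Aᵀ * A).IsHermitian from Matrix.isHermitian_conjTranspose_mul_self A).eigenvalues i)}

lemma l2norm_transpose {m n : ℕ} (A : Matrix (Fin m) (Fin n) ℝ) : ‖Aᵀ‖ = ‖A‖ := by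
  rw [← conjTranspose_eq_transpose_of_trivial, l2_opNorm_conjTranspose]

lemma l2norm_transpose_mul_self {m n : ℕ} (A : Matrix (Fin m) (Fin n) ℝ) :
    ‖Aᵀ * A‖ = ‖A‖ * ‖A‖ := by
  rw [← conjTranspose_eq_transpose_of_trivial, l2_opNorm_conjTranspose_mul_self]

lemma isUnit_of_rank_eq {k : ℕ} (M : Matrix (Fin k) (Fin k) ℝ) (h : M.rank = k) : IsUnit M := by
  rw [← Matrix.mulVec_surjective_iff_isUnit]
  have : LinearMap.range M.mulVecLin = ⊤ := by
    apply Submodule.eq_top_of_finrank_eq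
    rw [← Matrix.rank, h]; simp
  exact LinearMap.range_eq_top.mp this

/-- Full row rank implies `B * B⁺ = 1`. -/
lemma mul_pinv_eq_one {m n : ℕ} (B : Matrix (Fin m) (Fin n) ℝ) (Bpinv : Matrix (Fin n) (Fin m) ℝ)
    (hB : B.rank = m) (hBp : IsPinv B Bpinv) : B * Bpinv = 1 := by
  have hr : (B * Bᵀ).rank = m := by rw [Matrix.rank_self_mul_transpose, hB]
  have hdet : IsUnit (B * Bᵀ).det :=
    (Matrix.isUnit_iff_isUnit_det _).mp (isUnit_of_rank_eq _ hr)
  have h1 : (B * Bpinv) * (B * Bᵀ) = B * Bᵀ := by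
    rw [← Matrix.mul_assoc, hBp.1]
  have h2 : (B * Bpinv) * ((B * Bᵀ) * (B * Bᵀ)⁻¹) = (B * Bᵀ) * (B * Bᵀ)⁻¹ := by
    rw [← Matrix.mul_assoc, h1]
  rwa [Matrix.mul_nonsing_inv _ hdet, Matrix.mul_one] at h2

/-- Full column rank implies `A⁺ * A = 1`. -/
lemma pinv_mul_eq_one {m n : ℕ} (A : Matrix (Fin m) (Fin n) ℝ) (Apinv : Matrix (Fin n) (Fin m) ℝ)
    (hA : A.rank = n) (hAp : IsPinv A Apinv) : Apinv * A = 1 := by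
  have hr : (Aᵀ * A).rank = n := by rw [Matrix.rank_transpose_mul_self, hA]
  have hdet : IsUnit (Aᵀ * A).det :=
    (Matrix.isUnit_iff_isUnit_det _).mp (isUnit_of_rank_eq _ hr)
  have ha : A * (Apinv * A) = A := by have := hAp.1; rwa [Matrix.mul_assoc] at this
  have h1 : (Aᵀ * A) * (Apinv * A) = Aᵀ * A := by
    rw [Matrix.mul_assoc, ha]
  have h2 : ((Aᵀ*A)⁻¹ * (Aᵀ*A)) * (Apinv * A) = (Aᵀ*A)⁻¹ * (Aᵀ*A) := by
    rw [Matrix.mul_assoc, h1]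
  rwa [Matrix.nonsing_inv_mul _ hdet, Matrix.one_mul] at h2

lemma norm_proj_le {n : ℕ} (P : Matrix (Fin n) (Fin n) ℝ) (hPt : Pᵀ = P) (hPP : P * P = P) :
    ‖P‖ ≤ 1 := by
  have h : ‖P‖ * ‖P‖ = ‖P‖ := by
    rw [← l2norm_transpose_mul_self, hPt, hPP]
  nlinarith [norm_nonneg P]

set_option maxHeartbeats 1600000 in
lemma key {m n : ℕ} (A B : Matrix (Fin m) (Fin n) ℝ)
    (Apinv Bpinv : Matrix (Fin n) (Fin m) ℝ)
    (hB : B.rank = m)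
    (hAp : IsPinv A Apinv) (hBp : IsPinv B Bpinv)
    (hle : ‖Bpinv‖ ≤ ‖Apinv‖) :
    ‖Apinv - Bpinv‖ ≤ Real.sqrt 2 * ‖Apinv‖ * ‖Bpinv‖ * ‖A - B‖ := by
  have hBfull : B * Bpinv = 1 := mul_pinv_eq_one B Bpinv hB hBp
  set X : Matrix (Fin n) (Fin m) ℝ := Apinv * (B - A) * Bpinv with hX
  set Y : Matrix (Fin n) (Fin m) ℝ := (Apinv * A - 1) * Bpinv with hY
  -- decomposition
  have hdecomp : Apinv - Bpinv = X + Y := by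
    rw [hX, hY]
    rw [Matrix.mul_sub, Matrix.sub_mul, Matrix.sub_mul, Matrix.one_mul,
      Matrix.mul_assoc Apinv B Bpinv, hBfull, Matrix.mul_one]
    abel
  -- orthogonality
  have h0 : Apinvᵀ * (Apinv * A - 1) = 0 := by
    have hkey : Apinvᵀ * (Apinv * A) = Apinvᵀ := by
      rw [← hAp.2.2.2, ← Matrix.transpose_mul, hAp.2.1]
    rw [Matrix.mul_sub, hkey, Matrix.mul_one, sub_self]
  have hXtY : Xᵀ * Y = 0 := by
    have h1 : Apinvᵀ * ((Apinv * A - 1) * Bpinv) = 0 := by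
      rw [← Matrix.mul_assoc, h0, Matrix.zero_mul]
    rw [hX, hY, Matrix.transpose_mul, Matrix.transpose_mul, Matrix.mul_assoc,
      Matrix.mul_assoc, h1, Matrix.mul_zero, Matrix.mul_zero]
  have hYtX : Yᵀ * X = 0 := by
    have h2 := congrArg Matrix.transpose hXtY
    rwa [Matrix.transpose_mul, Matrix.transpose_transpose, Matrix.transpose_zero] at h2
  -- rewrite Y
  have hBpinv_eq : Bpinv = Bᵀ * (Bpinvᵀ * Bpinv) := by
    calc Bpinv = (Bpinv * B) * Bpinv := hBp.2.1.symm
      _ = (Bpinv * B)ᵀ * Bpinv := by rw [hBp.2.2.2]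
      _ = (Bᵀ * Bpinvᵀ) * Bpinv := by rw [Matrix.transpose_mul]
      _ = Bᵀ * (Bpinvᵀ * Bpinv) := by rw [Matrix.mul_assoc]
  have hA0 : (Apinv * A - 1) * Aᵀ = 0 := by
    have h3 : (Apinv * A) * Aᵀ = Aᵀ := by
      rw [← hAp.2.2.2, ← Matrix.transpose_mul, ← Matrix.mul_assoc, hAp.1]
    rw [Matrix.sub_mul, h3, Matrix.one_mul, sub_self]
  have hYeq : Y = (Apinv * A - 1) * (B - A)ᵀ * (Bpinvᵀ * Bpinv) := by
    rw [hY]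
    conv_lhs => rw [hBpinv_eq]
    rw [← Matrix.mul_assoc]
    congr 1
    rw [Matrix.transpose_sub, Matrix.mul_sub, hA0, sub_zero]
  -- norm bounds
  have hnX : ‖X‖ ≤ ‖Apinv‖ * ‖Bpinv‖ * ‖A - B‖ := by
    calc ‖X‖ ≤ ‖Apinv * (B - A)‖ * ‖Bpinv‖ := Matrix.l2_opNorm_mul _ _
      _ ≤ (‖Apinv‖ * ‖B - A‖) * ‖Bpinv‖ :=
          mul_le_mul_of_nonneg_right (Matrix.l2_opNorm_mul _ _) (norm_nonneg _)
      _ = ‖Apinv‖ * ‖Bpinv‖ * ‖A - B‖ := by rw [norm_sub_rev B A]; ring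
  have hproj : ‖Apinv * A - 1‖ ≤ 1 := by
    rw [norm_sub_rev]
    apply norm_proj_le
    · rw [Matrix.transpose_sub, Matrix.transpose_one, hAp.2.2.2]
    · have hQQ : (Apinv * A) * (Apinv * A) = Apinv * A := by
        rw [← Matrix.mul_assoc, hAp.2.1]
      simp only [Matrix.sub_mul, Matrix.mul_sub, Matrix.mul_one, Matrix.one_mul, hQQ]
      abel
  have hnY : ‖Y‖ ≤ ‖Apinv‖ * ‖Bpinv‖ * ‖A - B‖ := by
    have h1 : ‖Y‖ ≤ ‖Apinv * A - 1‖ * ‖A - B‖ * (‖Bpinv‖ * ‖Bpinv‖) := by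
      calc ‖Y‖ = ‖(Apinv * A - 1) * (B - A)ᵀ * (Bpinvᵀ * Bpinv)‖ := by rw [hYeq]
        _ ≤ ‖(Apinv * A - 1) * (B - A)ᵀ‖ * ‖Bpinvᵀ * Bpinv‖ := Matrix.l2_opNorm_mul _ _
        _ ≤ (‖Apinv * A - 1‖ * ‖(B - A)ᵀ‖) * ‖Bpinvᵀ * Bpinv‖ :=
            mul_le_mul_of_nonneg_right (Matrix.l2_opNorm_mul _ _) (norm_nonneg _)
        _ = ‖Apinv * A - 1‖ * ‖A - B‖ * (‖Bpinv‖ * ‖Bpinv‖) := by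
            rw [l2norm_transpose_mul_self, l2norm_transpose, norm_sub_rev B A]
    have e0 := norm_nonneg (A - B)
    have b0 := norm_nonneg Bpinv
    have h2 : ‖Apinv * A - 1‖ * ‖A - B‖ * (‖Bpinv‖ * ‖Bpinv‖) ≤
        1 * ‖A - B‖ * (‖Bpinv‖ * ‖Bpinv‖) :=
      mul_le_mul_of_nonneg_right (mul_le_mul_of_nonneg_right hproj e0) (mul_nonneg b0 b0)
    have h3 : ‖A - B‖ * (‖Bpinv‖ * ‖Bpinv‖) ≤ ‖A - B‖ * (‖Apinv‖ * ‖Bpinv‖) :=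
      mul_le_mul_of_nonneg_left (mul_le_mul_of_nonneg_right hle b0) e0
    have h4 : 1 * ‖A - B‖ * (‖Bpinv‖ * ‖Bpinv‖) = ‖A - B‖ * (‖Bpinv‖ * ‖Bpinv‖) := by ring
    have h5 : ‖A - B‖ * (‖Apinv‖ * ‖Bpinv‖) = ‖Apinv‖ * ‖Bpinv‖ * ‖A - B‖ := by ring
    linarith
  -- combine
  have hC : ‖X + Y‖ * ‖X + Y‖ = ‖Xᵀ * X + Yᵀ * Y‖ := by
    rw [← l2norm_transpose_mul_self (X + Y)]
    congr 1
    simp only [Matrix.transpose_add, Matrix.add_mul, Matrix.mul_add, hXtY, hYtX,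
      add_zero, zero_add]
  have hsum : ‖Xᵀ * X + Yᵀ * Y‖ ≤ ‖X‖ * ‖X‖ + ‖Y‖ * ‖Y‖ := by
    calc ‖Xᵀ * X + Yᵀ * Y‖ ≤ ‖Xᵀ * X‖ + ‖Yᵀ * Y‖ := norm_add_le _ _
      _ = ‖X‖ * ‖X‖ + ‖Y‖ * ‖Y‖ := by
          rw [l2norm_transpose_mul_self, l2norm_transpose_mul_self]
  set c := ‖Apinv‖ * ‖Bpinv‖ * ‖A - B‖ with hc
  have hc0 : 0 ≤ c := by positivity
  have hfin : ‖X + Y‖ ^ 2 ≤ 2 * c ^ 2 := by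
    have h4 : ‖X + Y‖ * ‖X + Y‖ ≤ ‖X‖ * ‖X‖ + ‖Y‖ * ‖Y‖ := hC ▸ hsum
    have h5 : ‖X‖ * ‖X‖ ≤ c * c := mul_self_le_mul_self (norm_nonneg X) hnX
    have h6 : ‖Y‖ * ‖Y‖ ≤ c * c := mul_self_le_mul_self (norm_nonneg Y) hnY
    have h7 : ‖X + Y‖ ^ 2 = ‖X + Y‖ * ‖X + Y‖ := sq ‖X + Y‖ ▸ rfl
    nlinarith [h4, h5, h6]
  rw [hdecomp]
  calc ‖X + Y‖ ≤ Real.sqrt (2 * c ^ 2) := by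
        rw [Real.le_sqrt (norm_nonneg _)]
        · exact hfin
        · positivity
    _ = Real.sqrt 2 * c := by
        rw [Real.sqrt_mul (by norm_num : (0:ℝ) ≤ 2), Real.sqrt_sq hc0]
    _ = Real.sqrt 2 * ‖Apinv‖ * ‖Bpinv‖ * ‖A - B‖ := by rw [hc]; ring

lemma keyT {m n : ℕ} (A B : Matrix (Fin m) (Fin n) ℝ)
    (Apinv Bpinv : Matrix (Fin n) (Fin m) ℝ)
    (hA : A.rank = m) (hB : B.rank = m)
    (hAp : IsPinv A Apinv) (hBp : IsPinv B Bpinv) :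
    ‖Apinv - Bpinv‖ ≤ Real.sqrt 2 * ‖Apinv‖ * ‖Bpinv‖ * ‖A - B‖ := by
  rcases le_total ‖Bpinv‖ ‖Apinv‖ with h | h
  · exact key A B Apinv Bpinv hB hAp hBp h
  · have h1 := key B A Bpinv Apinv hA hBp hAp h
    rw [norm_sub_rev Bpinv Apinv, norm_sub_rev B A] at h1
    calc ‖Apinv - Bpinv‖ ≤ Real.sqrt 2 * ‖Bpinv‖ * ‖Apinv‖ * ‖A - B‖ := h1
      _ = Real.sqrt 2 * ‖Apinv‖ * ‖Bpinv‖ * ‖A - B‖ := by ring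

lemma IsPinv.transpose {m n : ℕ} {A : Matrix (Fin m) (Fin n) ℝ} {P : Matrix (Fin n) (Fin m) ℝ}
    (h : IsPinv A P) : IsPinv Aᵀ Pᵀ := by
  obtain ⟨h1, h2, h3, h4⟩ := h
  refine ⟨?_, ?_, ?_, ?_⟩
  · rw [← Matrix.transpose_mul, ← Matrix.transpose_mul, ← Matrix.mul_assoc, h1]
  · rw [← Matrix.transpose_mul, ← Matrix.transpose_mul, ← Matrix.mul_assoc, h2]
  · rw [← Matrix.transpose_mul, Matrix.transpose_transpose]
    exact h4.symm
  · rw [← Matrix.transpose_mul, Matrix.transpose_transpose]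
    exact h3.symm

lemma keySq {n : ℕ} (A B : Matrix (Fin n) (Fin n) ℝ)
    (Apinv Bpinv : Matrix (Fin n) (Fin n) ℝ)
    (hA : A.rank = n) (hB : B.rank = n)
    (hAp : IsPinv A Apinv) (hBp : IsPinv B Bpinv) :
    ‖Apinv - Bpinv‖ ≤ ‖Apinv‖ * ‖Bpinv‖ * ‖A - B‖ := by
  have hAfull : Apinv * A = 1 := pinv_mul_eq_one A Apinv hA hAp
  have hBfull : B * Bpinv = 1 := mul_pinv_eq_one B Bpinv hB hBp
  have hdec : Apinv - Bpinv = Apinv * (B - A) * Bpinv := by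
    rw [Matrix.mul_sub, Matrix.sub_mul, Matrix.mul_assoc Apinv B Bpinv, hBfull,
      Matrix.mul_one, hAfull, Matrix.one_mul]
  rw [hdec]
  calc ‖Apinv * (B - A) * Bpinv‖ ≤ ‖Apinv * (B - A)‖ * ‖Bpinv‖ := Matrix.l2_opNorm_mul _ _
    _ ≤ (‖Apinv‖ * ‖B - A‖) * ‖Bpinv‖ :=
        mul_le_mul_of_nonneg_right (Matrix.l2_opNorm_mul _ _) (norm_nonneg _)
    _ = ‖Apinv‖ * ‖Bpinv‖ * ‖A - B‖ := by rw [norm_sub_rev B A]; ring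


/-- Wedin's pseudoinverse perturbation theorem for full-rank real matrices. -/
theorem wedin_pinv_perturbation {m n : ℕ} (A B : Matrix (Fin m) (Fin n) ℝ)
    (Apinv Bpinv : Matrix (Fin n) (Fin m) ℝ)
    (hA : A.rank = min m n) (hB : B.rank = min m n)
    (hAp : IsPinv A Apinv) (hBp : IsPinv B Bpinv) :
    spec (Apinv - Bpinv) ≤
      (if m = n then 1 else Real.sqrt 2) * spec Apinv * spec Bpinv * spec (A - B) := by
  rcases eq_or_ne m n with hmn | hmn
  · subst hmn
    rw [if_pos rfl]
    have hA' : A.rank = m := by simpa using hA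
    have hB' : B.rank = m := by simpa using hB
    show ‖Apinv - Bpinv‖ ≤ 1 * ‖Apinv‖ * ‖Bpinv‖ * ‖A - B‖
    rw [one_mul]
    exact keySq A B Apinv Bpinv hA' hB' hAp hBp
  · rw [if_neg hmn]
    show ‖Apinv - Bpinv‖ ≤ Real.sqrt 2 * ‖Apinv‖ * ‖Bpinv‖ * ‖A - B‖
    rcases lt_or_gt_of_ne hmn with h | h
    · have hA' : A.rank = m := by rw [hA, min_eq_left h.le]
      have hB' : B.rank = m := by rw [hB, min_eq_left h.le]
      exact keyT A B Apinv Bpinv hA' hB' hAp hBp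
    · have hA' : Aᵀ.rank = n := by rw [Matrix.rank_transpose, hA, min_eq_right h.le]
      have hB' : Bᵀ.rank = n := by rw [Matrix.rank_transpose, hB, min_eq_right h.le]
      have h1 := keyT Aᵀ Bᵀ Apinvᵀ Bpinvᵀ hA' hB' hAp.transpose hBp.transpose
      simp only [← Matrix.transpose_sub, l2norm_transpose] at h1
      exact h1
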